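/- Let N ≥ 2 and let p be a prime with p² ∣ N. Then 2p is the least positive integer n such that the constant n-tuple (N/p mod N, …, N/p mod N) of elements of ℤ/Nℤ satisfies M_n(N/p, …, N/p) = Id or = −Id; that is, the constant 2p-tuple (N/p, …, N/p) is the (N/p)-monomial minimal solution of (E_N). -/
import Mathlib


open Matrix

/-- `Mmat [a₁, …, aₙ]` is the product `[[aₙ,-1],[1,0]] ⋯ [[a₁,-1],[1,0]]`. -/
def Mmat {R : Type*} [CommRing R] : List R → Matrix (Fin 2) (Fin 2) R
  | [] => 1
  | a :: t => Mmat t * !![a, -1; 1, 0]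

/-- A tuple is a solution of (E_N) if its matrix is `Id` or `-Id`. -/
def IsSolution {R : Type*} [CommRing R] (l : List R) : Prop :=
  Mmat l = 1 ∨ Mmat l = -1

/-- The sum `(a₁,…,aₙ) ⊕ (b₁,…,bₘ) = (a₁+bₘ, a₂,…,aₙ₋₁, aₙ+b₁, b₂,…,bₘ₋₁)`. -/
def oplus {R : Type*} [CommRing R] (a b : List R) : List R :=
  List.ofFn (fun i : Fin (a.length + b.length - 2) =>
    if (i : ℕ) = 0 then a.getD 0 0 + b.getD (b.length - 1) 0
    else if (i : ℕ) < a.length - 1 then a.getD (i : ℕ) 0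
    else if (i : ℕ) = a.length - 1 then a.getD (a.length - 1) 0 + b.getD 0 0
    else b.getD ((i : ℕ) - a.length + 1) 0)

/-- Two tuples are equivalent if one is a cyclic permutation of the other or of
its reversal. -/
def TupleEquiv {R : Type*} (a b : List R) : Prop :=
  (∃ k, b = a.rotate k) ∨ (∃ k, b = a.reverse.rotate k)

/-- A solution `c` (of size ≥ 3) is reducible if `c ∼ a ⊕ b` with `b` a solution,
`a` of size ≥ 3 and `b` of size ≥ 3. -/
def Reducible {R : Type*} [CommRing R] (c : List R) : Prop :=
  ∃ a b : List R, 3 ≤ a.length ∧ 3 ≤ b.length ∧ IsSolution b ∧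
    TupleEquiv c (oplus a b)

/-- The alternating tuple `(k, -k, k, -k, …)` of length `n`. -/
def altList {R : Type*} [CommRing R] (n : ℕ) (k : R) : List R :=
  List.ofFn (fun i : Fin n => if (i : ℕ) % 2 = 0 then k else -k)

/-- Continuants: `K₋₁ = 0`, `K₀ = 1`,
`Kₙ(x₁,…,xₙ) = x₁·Kₙ₋₁(x₂,…,xₙ) - Kₙ₋₂(x₃,…,xₙ)`. -/
def contK {R : Type*} [CommRing R] : List R → R
  | [] => 1
  | [x] => x
  | x :: y :: t => x * contK (y :: t) - contK t


lemma Mmat_replicate {R : Type*} [CommRing R] (x : R) (n : ℕ) :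
    Mmat (List.replicate n x) = !![x,-1;1,0] ^ n := by
  induction n with
  | zero => rfl
  | succ n ih => rw [List.replicate_succ, Mmat, ih, pow_succ]

lemma Apow_even {R : Type*} [CommRing R] (a : R) (ha : a * a = 0) (m : ℕ) :
    (!![a,-1;1,0] : Matrix (Fin 2) (Fin 2) R) ^ (2*m) =
      !![(-1)^m, (-1)^m * (m*a); (-1)^(m+1) * (m*a), (-1)^m] := by
  induction m with
  | zero => simp [Matrix.one_fin_two]
  | succ m ih =>
    have h2 : 2*(m+1) = 2*m + 2 := by ring
    rw [h2, pow_add, ih, pow_two, Matrix.mul_fin_two, Matrix.mul_fin_two]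
    refine Matrix.ext fun i j => ?_
    fin_cases i <;> fin_cases j <;> simp
    · linear_combination ((-1:R)^m*(1+(m:R)))*ha
    · ring
    · linear_combination ((-1:R)^(m+1)*(m:R)*a)*ha
    · linear_combination ((-1:R)^m*(m:R))*ha

theorem replicate_div_prime_sq_minimal (N p : ℕ) (hN : 2 ≤ N) (hp : p.Prime)
    (hdvd : p ^ 2 ∣ N) :
    IsLeast {n : ℕ | 0 < n ∧ IsSolution (List.replicate n ((N / p : ℕ) : ZMod N))} (2 * p) := by
  haveI : Fact (1 < N) := ⟨hN⟩
  haveI : NeZero N := ⟨by omega⟩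
  have hp0 : 0 < p := hp.pos
  have hpN : p ∣ N := dvd_trans (dvd_pow_self p two_ne_zero) hdvd
  set a : ZMod N := ((N / p : ℕ) : ZMod N) with haa
  obtain ⟨k, hk⟩ := hdvd
  have hNp : N / p = p * k := by
    rw [hk, pow_two, mul_assoc, Nat.mul_div_cancel_left _ hp0]
  have ha2 : a * a = 0 := by
    rw [haa, ← Nat.cast_mul, ZMod.natCast_eq_zero_iff]
    exact ⟨k, by rw [hNp, hk]; ring⟩
  have hpa : (p : ZMod N) * a = 0 := by
    rw [haa, ← Nat.cast_mul, Nat.mul_div_cancel' hpN, ZMod.natCast_self]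
  have key : ∀ m : ℕ, Mmat (List.replicate (2*m) a) =
      !![(-1)^m, (-1)^m*((m:ZMod N)*a); (-1)^(m+1)*((m:ZMod N)*a), (-1)^m] := fun m => by
    rw [Mmat_replicate, Apow_even a ha2]
  constructor
  · refine ⟨by positivity, ?_⟩
    have hM := key p
    simp only [hpa, mul_zero] at hM
    rcases Nat.even_or_odd p with he | ho
    · left; rw [hM, he.neg_one_pow, Matrix.one_fin_two]
    · right; rw [hM, ho.neg_one_pow, Matrix.one_fin_two]
      norm_num
  · rintro n ⟨hn, hsol⟩
    rcases Nat.even_or_odd n with ⟨m, hm⟩ | ⟨m, hm⟩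
    · have hm' : n = 2*m := by omega
      have hM := key m
      rw [← hm'] at hM
      have h01 : Mmat (List.replicate n a) 0 1 = 0 := by
        rcases hsol with h | h <;> rw [h] <;> simp [Matrix.one_fin_two]
      rw [hM] at h01
      simp only [Matrix.cons_val_zero, Matrix.cons_val_one, Matrix.head_cons,
        Matrix.of_apply] at h01
      have hma : (m : ZMod N) * a = 0 := by
        have h1 : ((-1:ZMod N)^m)*((-1:ZMod N)^m) = 1 := by
          rw [← pow_add]; exact Even.neg_one_pow ⟨m, rfl⟩
        calc (m : ZMod N) * a = ((-1:ZMod N)^m*(-1:ZMod N)^m) * ((m:ZMod N)*a) := by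
              rw [h1, one_mul]
          _ = (-1:ZMod N)^m * ((-1:ZMod N)^m * ((m:ZMod N)*a)) := by ring
          _ = 0 := by rw [h01, mul_zero]
      have hdm : (N:ℕ) ∣ m * (N/p) := by
        rwa [haa, ← Nat.cast_mul, ZMod.natCast_eq_zero_iff] at hma
      have hq : 0 < N / p := Nat.div_pos (Nat.le_of_dvd (by omega) hpN) hp0
      have hpm : p ∣ m := by
        have hN' : N = p * (N/p) := (Nat.mul_div_cancel' hpN).symm
        nth_rewrite 1 [hN'] at hdm
        exact (Nat.mul_dvd_mul_iff_right hq).mp hdm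
      have hm0 : 0 < m := by omega
      have := Nat.le_of_dvd hm0 hpm
      omega
    · exfalso
      have hent : Mmat (List.replicate n a) 1 0 = (-1)^m := by
        rw [hm, List.replicate_succ, Mmat, key m, Matrix.mul_fin_two]
        simp [mul_assoc, ha2]
      have h10 : Mmat (List.replicate n a) 1 0 = 0 := by
        rcases hsol with h | h <;> rw [h] <;> simp [Matrix.one_fin_two]
      rw [hent] at h10
      rcases Nat.even_or_odd m with he | ho
      · rw [he.neg_one_pow] at h10; exact one_ne_zero h10
      · rw [ho.neg_one_pow] at h10; exact neg_ne_zero.mpr one_ne_zero h10
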